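/- Let rk be a polymatroid rank function on {1,…,n} and v ∈ ℤⁿ with v in the base polytope Q(rk). Fix 0 < ε < 1. Then the following are equivalent: (1) Σ_{i=1}^s v_i = rk({1,…,s}) for every s = 1,…,n; (2) v + ε(e_j − e_k) ∉ Q(rk) for all j < k. -/

import Mathlib

/-- A (discrete) polymatroid rank function on the ground set `X`. -/
def IsPolymatroid {α : Type*} [DecidableEq α] (X : Finset α) (rk : Finset α → ℕ) : Prop :=
  rk ∅ = 0 ∧
  (∀ A B : Finset α, A ⊆ B → B ⊆ X → rk A ≤ rk B) ∧
  (∀ A B : Finset α, A ⊆ X → B ⊆ X → rk (A ∪ B) + rk (A ∩ B) ≤ rk A + rk B)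

/-- Membership of a real vector in the base polytope `Q(rk)`. -/
def InBasePolytope (n : ℕ) (rk : Finset (Fin n) → ℕ) (w : Fin n → ℝ) : Prop :=
  (∑ i, w i = (rk Finset.univ : ℝ)) ∧
  ∀ A : Finset (Fin n), ∑ i ∈ A, w i ≤ (rk A : ℝ)

/-- For an integer point `v ∈ Q(rk)` and `0 < ε < 1`: all prefix sums of `v` realize the
prefix ranks iff `v + ε(e_j − e_k) ∉ Q(rk)` for all `j < k`. -/
theorem prefix_rank_iff_no_move (n : ℕ) (rk : Finset (Fin n) → ℕ)
    (hrk : IsPolymatroid Finset.univ rk) (v : Fin n → ℤ)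
    (hv : InBasePolytope n rk (fun i => (v i : ℝ)))
    (ε : ℝ) (hε0 : 0 < ε) (hε1 : ε < 1) :
    ((∀ s : ℕ, 1 ≤ s → s ≤ n →
        ∑ i ∈ Finset.univ.filter (fun i : Fin n => (i : ℕ) < s), v i
          = (rk (Finset.univ.filter (fun i : Fin n => (i : ℕ) < s)) : ℤ))
      ↔ (∀ j k : Fin n, j < k →
        ¬ InBasePolytope n rk
            (fun i => (v i : ℝ) + (if i = j then ε else 0) - (if i = k then ε else 0)))) := by
  classical
  obtain ⟨hrk0, hmono, hsub⟩ := hrk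
  obtain ⟨hsumR, hleR⟩ := hv
  have hleZ : ∀ A : Finset (Fin n), ∑ i ∈ A, v i ≤ (rk A : ℤ) := by
    intro A
    have : ∑ i ∈ A, (v i : ℝ) ≤ (rk A : ℝ) := hleR A
    exact_mod_cast this
  have hsumZ : ∑ i, v i = (rk (Finset.univ : Finset (Fin n)) : ℤ) := by
    have : ∑ i, (v i : ℝ) = (rk (Finset.univ : Finset (Fin n)) : ℝ) := hsumR
    exact_mod_cast this
  -- sum formula for the perturbed vector
  have hsumw : ∀ (j k : Fin n) (A : Finset (Fin n)),
      ∑ i ∈ A, ((v i : ℝ) + (if i = j then ε else 0) - (if i = k then ε else 0))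
      = (∑ i ∈ A, (v i : ℝ)) + (if j ∈ A then ε else 0) - (if k ∈ A then ε else 0) := by
    intro j k A
    rw [Finset.sum_sub_distrib, Finset.sum_add_distrib, Finset.sum_ite_eq' A,
      Finset.sum_ite_eq' A]
  -- tight sets are closed under union and intersection
  have hTclosed : ∀ A B : Finset (Fin n),
      ∑ i ∈ A, v i = (rk A : ℤ) → ∑ i ∈ B, v i = (rk B : ℤ) →
      (∑ i ∈ A ∩ B, v i = (rk (A ∩ B) : ℤ)) ∧ (∑ i ∈ A ∪ B, v i = (rk (A ∪ B) : ℤ)) := by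
    intro A B hA hB
    have hsubm : (rk (A ∪ B) : ℤ) + rk (A ∩ B) ≤ rk A + rk B := by
      exact_mod_cast hsub A B (Finset.subset_univ _) (Finset.subset_univ _)
    have h1 : ∑ i ∈ A ∪ B, v i + ∑ i ∈ A ∩ B, v i = ∑ i ∈ A, v i + ∑ i ∈ B, v i :=
      Finset.sum_union_inter
    have h2 := hleZ (A ∪ B)
    have h3 := hleZ (A ∩ B)
    omega
  constructor
  · -- forward direction
    intro hpref j k hjk hmem
    obtain ⟨-, hle'⟩ := hmem
    set A := Finset.univ.filter (fun i : Fin n => (i : ℕ) < (j : ℕ) + 1) with hA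
    have h1 := hle' A
    rw [hsumw] at h1
    have hjA : j ∈ A := by simp [hA]
    have hkA : k ∉ A := by
      simp only [hA, Finset.mem_filter, Finset.mem_univ, true_and, not_lt]
      exact hjk
    have hp := hpref ((j : ℕ) + 1) (by omega) (by have := j.2; omega)
    have hp' : (∑ i ∈ A, (v i : ℝ)) = (rk A : ℝ) := by exact_mod_cast hp
    rw [if_pos hjA, if_neg hkA] at h1
    linarith
  · -- backward direction
    intro h2
    have key : ∀ s : ℕ, s ≤ n →
        ∑ i ∈ Finset.univ.filter (fun i : Fin n => (i : ℕ) < s), v i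
          = (rk (Finset.univ.filter (fun i : Fin n => (i : ℕ) < s)) : ℤ) := by
      intro s
      induction s using Nat.strong_induction_on with
      | _ s IH =>
        intro hsn
        rcases Nat.eq_zero_or_pos s with h0s | h1s
        · subst h0s
          have : Finset.univ.filter (fun i : Fin n => (i : ℕ) < 0) = (∅ : Finset (Fin n)) := by
            simp
          rw [this, hrk0]
          simp
        rcases eq_or_lt_of_le hsn with hsn' | hsn'
        · have huniv : Finset.univ.filter (fun i : Fin n => (i : ℕ) < s)
              = (Finset.univ : Finset (Fin n)) := by
            ext i
            have := i.2
            simp only [Finset.mem_filter, Finset.mem_univ, true_and, iff_true]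
            omega
          rw [huniv]
          exact hsumZ
        · -- 1 ≤ s < n
          by_contra hnt
          set j : Fin n := ⟨s - 1, by omega⟩ with hj
          have hTuniv : ∑ i ∈ (Finset.univ : Finset (Fin n)), v i
              = (rk (Finset.univ : Finset (Fin n)) : ℤ) := hsumZ
          have claim : ∃ k : Fin n, j < k ∧
              ∀ A : Finset (Fin n), j ∈ A → ∑ i ∈ A, v i = (rk A : ℤ) → k ∈ A := by
            by_contra hc
            push_neg at hc
            have hc' : ∀ k : Fin n, ∃ A : Finset (Fin n),
                j ∈ A ∧ (∑ i ∈ A, v i = (rk A : ℤ)) ∧ (j < k → k ∉ A) := by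
              intro k
              by_cases h : j < k
              · obtain ⟨A, h1', h2', h3'⟩ := hc k h
                exact ⟨A, h1', h2', fun _ => h3'⟩
              · exact ⟨Finset.univ, Finset.mem_univ _, hTuniv, fun h' => absurd h' h⟩
            choose F hF1 hF2 hF3 using hc'
            have hC : ∀ K : Finset (Fin n), j ∈ K.inf F ∧
                ∑ i ∈ K.inf F, v i = (rk (K.inf F) : ℤ) := by
              intro K
              induction K using Finset.induction with
              | empty =>
                rw [Finset.inf_empty]
                exact ⟨by simp [Finset.top_eq_univ], by simpa [Finset.top_eq_univ] using hTuniv⟩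
              | insert _ _ hx ihK =>
                rw [Finset.inf_insert]
                refine ⟨Finset.mem_inter.2 ⟨hF1 _, ihK.1⟩, (hTclosed _ _ (hF2 _) ihK.2).1⟩
            obtain ⟨hjC, hTC⟩ := hC Finset.univ
            set C := (Finset.univ : Finset (Fin n)).inf F with hCdef
            have hCsub : ∀ i : Fin n, i ∈ C → ¬ j < i := by
              intro i hi hji
              have hsubC : C ⊆ F i := Finset.le_iff_subset.mp (Finset.inf_le (Finset.mem_univ i))
              exact hF3 i hji (hsubC hi)
            have hsplit : Finset.univ.filter (fun i : Fin n => (i : ℕ) < s)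
                = Finset.univ.filter (fun i : Fin n => (i : ℕ) < s - 1) ∪ C := by
              ext i
              simp only [Finset.mem_union, Finset.mem_filter, Finset.mem_univ, true_and]
              constructor
              · intro hi
                rcases Nat.lt_or_ge (i : ℕ) (s - 1) with h | h
                · exact Or.inl h
                · have : i = j := by
                    apply Fin.ext
                    simp only [hj]
                    omega
                  exact Or.inr (this ▸ hjC)
              · intro h
                rcases h with h | h
                · omega
                · have := hCsub i h
                  have : (i : ℕ) ≤ (j : ℕ) := by
                    by_contra hh
                    exact this (by exact Fin.lt_def.2 (by omega))
                  simp only [hj] at this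
                  omega
            have hprev := IH (s - 1) (by omega) (by omega)
            have := (hTclosed _ _ hprev hTC).2
            rw [← hsplit] at this
            exact hnt this
          obtain ⟨k, hjk, hkin⟩ := claim
          refine h2 j k hjk ⟨?_, ?_⟩
          · rw [hsumw]
            rw [if_pos (Finset.mem_univ j), if_pos (Finset.mem_univ k)]
            have : (∑ i, (v i : ℝ)) = (rk (Finset.univ : Finset (Fin n)) : ℝ) := hsumR
            linarith
          · intro A
            rw [hsumw]
            have hAle : (∑ i ∈ A, (v i : ℝ)) ≤ (rk A : ℝ) := by exact_mod_cast hleZ A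
            by_cases hjA : j ∈ A <;> by_cases hkA : k ∈ A <;>
              simp only [hjA, hkA, if_true, if_false, eq_self_iff_true, if_pos, if_neg]
            · linarith
            · -- hard case: j ∈ A, k ∉ A : A is not tight
              have hnotT : ∑ i ∈ A, v i ≠ (rk A : ℤ) := fun h => hkA (hkin A hjA h)
              have hlt : ∑ i ∈ A, v i ≤ (rk A : ℤ) - 1 := by
                have := hleZ A; omega
              have : (∑ i ∈ A, (v i : ℝ)) ≤ (rk A : ℝ) - 1 := by exact_mod_cast hlt
              linarith
            · linarith
            · linarith
    intro s hs1 hsn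
    exact key s hsn
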